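/- F is a continuously differentiable probability distribution function, i.e. F is C¹, nondecreasing, with limit 0 at -∞ and limit 1 at +∞. -/

import Mathlib

open Real Filter MeasureTheory

noncomputable def F : ℝ → ℝ := fun x =>
  if x = 0 then 1/2 else Real.exp x / (Real.exp x - 1) - 1/x

/-- Complex extension of `F`. -/
noncomputable def G : ℂ → ℂ := fun z =>
  if z = 0 then 1/2 else Complex.exp z / (Complex.exp z - 1) - 1/z

lemma cexp_sub_one_lower {z : ℂ} (hz : ‖z‖ ≤ 1/2) :
    ‖z‖ / 2 ≤ ‖Complex.exp z - 1‖ := by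
  have h := Complex.norm_exp_sub_one_sub_id_le (x := z) (by linarith)
  have h2 : ‖z‖ - ‖Complex.exp z - 1‖ ≤
      ‖Complex.exp z - 1 - z‖ := by
    have h3 := norm_sub_norm_le z (Complex.exp z - 1)
    rw [show z - (Complex.exp z - 1) = -(Complex.exp z - 1 - z) by ring, norm_neg] at h3
    simpa using h3
  nlinarith [norm_nonneg z, norm_nonneg (Complex.exp z - 1)]

lemma cexp_ne_one_of_small {z : ℂ} (hz : z ≠ 0) (h1 : ‖z‖ ≤ 1/2) :
    Complex.exp z ≠ 1 := by
  intro h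
  have h2 := cexp_sub_one_lower h1
  rw [h, sub_self, norm_zero] at h2
  have : 0 < ‖z‖ := norm_pos_iff.2 hz
  linarith

lemma G_est {z : ℂ} (hz : z ≠ 0) (h1 : ‖z‖ ≤ 1/2) :
    ‖G z - 1/2‖ ≤ 2 * ‖z‖ := by
  have hE : Complex.exp z - 1 ≠ 0 := sub_ne_zero.2 (cexp_ne_one_of_small hz h1)
  have hid : G z - 1/2 =
      (z * (Complex.exp z + 1) - 2 * (Complex.exp z - 1)) / (2 * z * (Complex.exp z - 1)) := by
    rw [G, if_neg hz]
    field_simp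
    ring
  -- numerator estimate
  set E := Complex.exp z - (1 + z + z^2/2) with hEdef
  have hb : ‖E‖ ≤ ‖z‖ ^ 3 * (2/9) := by
    have := Complex.exp_bound (x := z) (by linarith) (n := 3) (by norm_num)
    have hsum : (∑ m ∈ Finset.range 3, z ^ m / m.factorial) = 1 + z + z^2/2 := by
      simp [Finset.sum_range_succ]
      try norm_num
      try ring
    rw [hsum] at this
    calc ‖E‖ ≤ ‖z‖ ^ 3 * (4 * (6 * 3 : ℝ)⁻¹) := by
          convert this using 2 <;> norm_num
      _ = ‖z‖ ^ 3 * (2/9) := by norm_num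
  have hnum : z * (Complex.exp z + 1) - 2 * (Complex.exp z - 1) = z^3/2 + z * E - 2 * E := by
    rw [hEdef]; ring
  have hnumb : ‖z * (Complex.exp z + 1) - 2 * (Complex.exp z - 1)‖ ≤
      2 * ‖z‖ ^ 3 := by
    rw [hnum]
    calc ‖z^3/2 + z * E - 2 * E‖
        ≤ ‖z^3/2 + z * E‖ + ‖2 * E‖ := by
          simpa [sub_eq_add_neg] using norm_add_le (z^3/2 + z*E) (-(2*E))
      _ ≤ (‖z^3/2‖ + ‖z * E‖) + ‖2 * E‖ := by
          gcongr; exact norm_add_le _ _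
      _ = ‖z‖ ^ 3 / 2 + ‖z‖ * ‖E‖ + 2 * ‖E‖ := by
          simp [norm_mul, norm_div, norm_pow]
          try norm_num
          try ring
      _ ≤ 2 * ‖z‖ ^ 3 := by
          have h0 := norm_nonneg z
          nlinarith [hb, norm_nonneg E]
  have hden : ‖z‖ ^ 2 ≤ ‖2 * z * (Complex.exp z - 1)‖ := by
    have h2 := cexp_sub_one_lower h1
    have h0 : 0 < ‖z‖ := by simpa [norm_pos_iff] using hz
    calc ‖z‖ ^ 2 = 2 * ‖z‖ * (‖z‖ / 2) := by ring
      _ ≤ 2 * ‖z‖ * ‖Complex.exp z - 1‖ := by gcongr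
      _ = ‖2 * z * (Complex.exp z - 1)‖ := by
          simp [norm_mul]
          try ring
  rw [hid, norm_div]
  have h0 : 0 < ‖z‖ := by simpa [norm_pos_iff] using hz
  have hden0 : 0 < ‖2 * z * (Complex.exp z - 1)‖ :=
    lt_of_lt_of_le (by positivity) hden
  rw [div_le_iff₀ hden0]
  calc ‖z * (Complex.exp z + 1) - 2 * (Complex.exp z - 1)‖
      ≤ 2 * ‖z‖ ^ 3 := hnumb
    _ = 2 * ‖z‖ * ‖z‖ ^ 2 := by ring
    _ ≤ 2 * ‖z‖ * ‖2 * z * (Complex.exp z - 1)‖ := by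
        gcongr

lemma G_analyticAt : AnalyticAt ℂ G 0 := by
  apply Complex.analyticAt_of_differentiable_on_punctured_nhds_of_continuousAt
  · -- differentiable on punctured neighborhood
    have hball : ∀ᶠ z in nhdsWithin (0:ℂ) {(0:ℂ)}ᶜ, ‖z‖ < 1/2 := by
      apply eventually_nhdsWithin_of_eventually_nhds
      have : Metric.ball (0:ℂ) (1/2) ∈ nhds (0:ℂ) := Metric.ball_mem_nhds _ (by norm_num)
      filter_upwards [this] with z hz
      simpa [Complex.dist_eq] using hz
    filter_upwards [self_mem_nhdsWithin, hball] with z hz hlt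
    have hz' : z ≠ 0 := hz
    have hE : Complex.exp z - 1 ≠ 0 := sub_ne_zero.2 (cexp_ne_one_of_small hz' hlt.le)
    have hopen : ∀ᶠ w in nhds z, w ≠ (0:ℂ) := eventually_ne_nhds hz'
    have heq : G =ᶠ[nhds z] fun w => Complex.exp w / (Complex.exp w - 1) - 1/w := by
      filter_upwards [hopen] with w hw
      rw [G, if_neg hw]
    apply DifferentiableAt.congr_of_eventuallyEq _ heq
    exact (Complex.differentiable_exp.differentiableAt.div
      (Complex.differentiable_exp.differentiableAt.sub_const 1) hE).sub
      ((differentiableAt_const 1).div differentiableAt_id hz')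
  · -- continuity at 0
    rw [Metric.continuousAt_iff]
    intro ε hε
    refine ⟨min (1/2) (ε/4), by positivity, fun {z} hd => ?_⟩
    rw [Complex.dist_eq, sub_zero] at hd
    have h1 : ‖z‖ ≤ 1/2 := (lt_min_iff.1 hd).1.le
    have h2 : ‖z‖ < ε/4 := (lt_min_iff.1 hd).2
    rcases eq_or_ne z 0 with rfl | hz
    · simpa [Complex.dist_eq] using hε
    · have := G_est hz h1
      have hG0 : G 0 = 1/2 := by simp [G]
      rw [Complex.dist_eq, hG0]
      calc ‖G z - 1/2‖ ≤ 2 * ‖z‖ := this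
        _ < ε := by linarith

lemma FG (x : ℝ) : ((F x : ℝ) : ℂ) = G x := by
  rcases eq_or_ne x 0 with rfl | hx
  · norm_num [F, G]
  · have hx' : (x : ℂ) ≠ 0 := Complex.ofReal_ne_zero.2 hx
    simp only [F, G, if_neg hx, if_neg hx']
    push_cast [Complex.ofReal_exp]
    ring

lemma F_analyticAt0 : AnalyticAt ℝ F 0 := by
  have h1 : AnalyticAt ℝ G 0 := G_analyticAt.restrictScalars
  have h1' : AnalyticAt ℝ G ((Complex.ofRealCLM : ℝ →L[ℝ] ℂ) 0) := by
    rw [map_zero]; exact h1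
  have h2 : AnalyticAt ℝ (G ∘ (Complex.ofRealCLM : ℝ →L[ℝ] ℂ)) 0 :=
    h1'.comp (Complex.ofRealCLM.analyticAt 0)
  have h3 : AnalyticAt ℝ ((Complex.reCLM : ℂ →L[ℝ] ℝ) ∘
      (G ∘ (Complex.ofRealCLM : ℝ →L[ℝ] ℂ))) 0 :=
    (Complex.reCLM.analyticAt _).comp h2
  have heq : ((Complex.reCLM : ℂ →L[ℝ] ℝ) ∘
      (G ∘ (Complex.ofRealCLM : ℝ →L[ℝ] ℂ))) = F := by
    funext x
    simp only [Function.comp_apply, Complex.ofRealCLM_apply, Complex.reCLM_apply]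
    rw [← FG x, Complex.ofReal_re]
  rwa [heq] at h3

lemma F_eventually {x : ℝ} (hx : x ≠ 0) :
    F =ᶠ[nhds x] fun y => Real.exp y / (Real.exp y - 1) - 1/y := by
  filter_upwards [eventually_ne_nhds hx] with y hy
  simp only [F, if_neg hy]

lemma exp_sub_one_ne {x : ℝ} (hx : x ≠ 0) : Real.exp x - 1 ≠ 0 :=
  sub_ne_zero.2 (fun h => hx ((Real.exp_eq_one_iff x).1 h))

lemma F_contDiff : ContDiff ℝ 1 F := by
  rw [contDiff_iff_contDiffAt]
  intro x
  rcases eq_or_ne x 0 with rfl | hx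
  · exact F_analyticAt0.contDiffAt
  · have hE : Real.exp x - 1 ≠ 0 := exp_sub_one_ne hx
    have hcd : ContDiffAt ℝ 1 (fun y => Real.exp y / (Real.exp y - 1) - 1/y) x := by
      apply ContDiffAt.sub
      · exact Real.contDiff_exp.contDiffAt.div
          (Real.contDiff_exp.contDiffAt.sub contDiffAt_const) hE
      · exact contDiffAt_const.div contDiffAt_id hx
    exact hcd.congr_of_eventuallyEq (F_eventually hx)

lemma F_hasDerivAt {x : ℝ} (hx : x ≠ 0) :
    HasDerivAt F (1/x^2 - Real.exp x / (Real.exp x - 1)^2) x := by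
  have hE : Real.exp x - 1 ≠ 0 := exp_sub_one_ne hx
  have h1 : HasDerivAt (fun y => Real.exp y / (Real.exp y - 1))
      ((Real.exp x * (Real.exp x - 1) - Real.exp x * Real.exp x) / (Real.exp x - 1)^2) x :=
    (Real.hasDerivAt_exp x).div ((Real.hasDerivAt_exp x).sub_const 1) hE
  have h2 : HasDerivAt (fun y : ℝ => 1/y) (-(x^2)⁻¹) x := by
    simpa [one_div] using hasDerivAt_inv hx
  have h3 := h1.sub h2
  have heq : (Real.exp x * (Real.exp x - 1) - Real.exp x * Real.exp x) / (Real.exp x - 1)^2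
      - -(x^2)⁻¹ = 1/x^2 - Real.exp x / (Real.exp x - 1)^2 := by
    field_simp
    ring
  rw [heq] at h3
  exact h3.congr_of_eventuallyEq (F_eventually hx)

lemma key_pos {x : ℝ} (hx : 0 < x) : x^2 * Real.exp x ≤ (Real.exp x - 1)^2 := by
  set s := Real.exp (x/2) with hs
  have hs0 : 0 < s := Real.exp_pos _
  have hss : s * s = Real.exp x := by rw [hs, ← Real.exp_add]; ring_nf
  have hsinh : x/2 < Real.sinh (x/2) := Real.self_lt_sinh_iff.2 (by positivity)
  rw [Real.sinh_eq] at hsinh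
  have hinv : Real.exp (-(x/2)) = s⁻¹ := by rw [Real.exp_neg]
  rw [hinv] at hsinh
  have hinv2 : s⁻¹ * s = 1 := inv_mul_cancel₀ (ne_of_gt hs0)
  have hxs : x * s < s * s - 1 := by
    have h := mul_lt_mul_of_pos_right (show x < s - s⁻¹ by linarith) hs0
    nlinarith
  have hA : 0 < s * s - 1 - x * s := by linarith
  have hB : 0 < s * s - 1 + x * s := by nlinarith [mul_pos hx hs0]
  rw [← hss]
  nlinarith [mul_pos hA hB]

lemma key (x : ℝ) : x^2 * Real.exp x ≤ (Real.exp x - 1)^2 := by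
  rcases lt_trichotomy x 0 with hx | rfl | hx
  · have h := key_pos (x := -x) (by linarith)
    have hab : Real.exp (-x) * Real.exp x = 1 := by
      rw [← Real.exp_add]; simp
    set a := Real.exp x with ha
    set b := Real.exp (-x) with hb
    have h' : x^2 * b * a^2 ≤ (b - 1)^2 * a^2 := by nlinarith [sq_nonneg a]
    have e1 : (b - 1)^2 * a^2 = (b * a - a)^2 := by ring
    have e2 : x^2 * b * a^2 = x^2 * a * (b * a) := by ring
    rw [hab] at e1 e2
    nlinarith [h', e1, e2]
  · simp
  · exact key_pos hx

lemma deriv_F_nonneg' {x : ℝ} (hx : x ≠ 0) : 0 ≤ deriv F x := by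
  rw [(F_hasDerivAt hx).deriv]
  have hE : Real.exp x - 1 ≠ 0 := exp_sub_one_ne hx
  have hE2 : 0 < (Real.exp x - 1)^2 := by positivity
  have hx2 : 0 < x^2 := by positivity
  rw [sub_nonneg, div_le_div_iff₀ hE2 hx2]
  nlinarith [key x]

lemma tendsto_one_div_atBot : Tendsto (fun x : ℝ => 1/x) atBot (nhds 0) := by
  have h1 : Tendsto (fun x : ℝ => (-x)⁻¹) atBot (nhds 0) :=
    tendsto_inv_atTop_zero.comp tendsto_neg_atBot_atTop
  have h2 := h1.neg
  rw [neg_zero] at h2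
  refine h2.congr fun x => ?_
  rw [one_div, ← inv_neg, neg_neg]

theorem F_is_C1_distribution_function :
    ContDiff ℝ 1 F ∧ Monotone F ∧
    Tendsto F atBot (nhds 0) ∧ Tendsto F atTop (nhds 1) := by
  have hC1 : ContDiff ℝ 1 F := F_contDiff
  have hdiff : Differentiable ℝ F := hC1.differentiable one_ne_zero
  have hcont : Continuous (deriv F) := (contDiff_one_iff_deriv.1 hC1).2
  have hd0 : 0 ≤ deriv F 0 := by
    have ht : Tendsto (deriv F) (nhdsWithin 0 {(0:ℝ)}ᶜ) (nhds (deriv F 0)) :=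
      (hcont.tendsto 0).mono_left nhdsWithin_le_nhds
    refine ge_of_tendsto ht ?_
    filter_upwards [self_mem_nhdsWithin] with x hx
    exact deriv_F_nonneg' hx
  have hmono : Monotone F := by
    apply monotone_of_deriv_nonneg hdiff
    intro x
    rcases eq_or_ne x 0 with rfl | hx
    · exact hd0
    · exact deriv_F_nonneg' hx
  refine ⟨hC1, hmono, ?_, ?_⟩
  · have hev : F =ᶠ[atBot] fun x => Real.exp x / (Real.exp x - 1) - 1/x := by
      filter_upwards [eventually_lt_atBot (0:ℝ)] with x hx
      simp only [F, if_neg (ne_of_lt hx)]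
    have h1 : Tendsto (fun x : ℝ => Real.exp x / (Real.exp x - 1)) atBot (nhds 0) := by
      have := Real.tendsto_exp_atBot.div (Real.tendsto_exp_atBot.sub_const 1)
        (by norm_num : (0:ℝ) - 1 ≠ 0)
      rw [zero_div] at this; exact this
    have h := h1.sub tendsto_one_div_atBot
    rw [sub_zero] at h
    exact Tendsto.congr' hev.symm h
  · have hev : F =ᶠ[atTop] fun x => 1 + (Real.exp x - 1)⁻¹ - 1/x := by
      filter_upwards [eventually_gt_atTop (0:ℝ)] with x hx
      have hx0 : x ≠ 0 := ne_of_gt hx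
      have hE : Real.exp x - 1 ≠ 0 := exp_sub_one_ne hx0
      simp only [F, if_neg hx0]
      field_simp
      try ring
    have h1 : Tendsto (fun x : ℝ => (Real.exp x - 1)⁻¹) atTop (nhds 0) := by
      apply tendsto_inv_atTop_zero.comp
      exact (tendsto_atTop_add_const_right _ (-1) Real.tendsto_exp_atTop).congr
        fun x => by ring
    have h2 : Tendsto (fun x : ℝ => 1/x) atTop (nhds 0) := by
      simpa [one_div] using tendsto_inv_atTop_zero (𝕜 := ℝ)
    have hconst : Tendsto (fun _ : ℝ => (1:ℝ)) atTop (nhds 1) := tendsto_const_nhds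
    have h := (hconst.add h1).sub h2
    rw [add_zero, sub_zero] at h
    exact Tendsto.congr' hev.symm h
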